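/- Let x_1, ..., x_N be a sequence of positive integers such that (x_1, x_2) ≠ (2, 1) and |x_{i+1} - x_i| = 1 for all i = 1, ..., N-1. If N ≥ (max_{i=1}^N x_i)^2, then the sequence can be partitioned into consecutive blocks (chunks) such that each block contains an element whose value equals the length of that block. -/

import Mathlib

/-- The prefix `x 0, x 1, ..., x (N-1)` can be partitioned into consecutive proper
chunks: there are cut positions `0 = c 0 < c 1 < ... < c m = N` such that each chunk
`x (c k), ..., x (c (k+1) - 1)` contains an element whose value equals its length. -/
def ProperChunkPartition (x : ℕ → ℕ) (N : ℕ) : Prop :=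
  ∃ (m : ℕ) (c : ℕ → ℕ), c 0 = 0 ∧ c m = N ∧ (∀ k < m, c k < c (k + 1)) ∧
    ∀ k < m, ∃ j, c k ≤ j ∧ j < c (k + 1) ∧ x j = c (k + 1) - c k

set_option linter.unusedSectionVars false

namespace ChunkAux

variable {x : ℕ → ℕ} {N : ℕ}

/-- minimal proper chunk length from `p` -/
noncomputable def A (x : ℕ → ℕ) (N p : ℕ) : ℕ :=
  sInf {L | ∃ j, p ≤ j ∧ j < N ∧ j - p + 1 ≤ L ∧ x j ≤ L}

/-- maximal proper chunk length from `p` -/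
def B (x : ℕ → ℕ) (N p : ℕ) : ℕ :=
  (Finset.Ico p N).sup (fun j => if j + 1 ≤ x j + p then x j else 0)

lemma reach_zero : ProperChunkPartition x 0 :=
  ⟨0, fun _ => 0, rfl, rfl, by omega, by omega⟩

lemma reach_step {p q : ℕ} (hp : ProperChunkPartition x p) (hpq : p < q)
    (j : ℕ) (hj1 : p ≤ j) (hj2 : j < q) (hj3 : x j = q - p) :
    ProperChunkPartition x q := by
  obtain ⟨m, c, hc0, hcm, hinc, hwit⟩ := hp
  refine ⟨m + 1, fun k => if k ≤ m then c k else q, ?_, ?_, ?_, ?_⟩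
  · simp [hc0]
  · simp
  · intro k hk
    rcases Nat.lt_or_ge k m with h | h
    · have h1 : (if k ≤ m then c k else q) = c k := if_pos (by omega)
      have h2 : (if k + 1 ≤ m then c (k+1) else q) = c (k+1) := if_pos (by omega)
      simp only [h1, h2]
      exact hinc k h
    · have hkm : k = m := by omega
      rw [hkm]
      have h1 : (if m ≤ m then c m else q) = c m := if_pos (le_refl _)
      have h2 : (if m + 1 ≤ m then c (m+1) else q) = q := if_neg (by omega)
      simp only [h1, h2]
      omega
  · intro k hk
    rcases Nat.lt_or_ge k m with h | h
    · obtain ⟨j', hw⟩ := hwit k h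
      refine ⟨j', ?_⟩
      have h1 : (if k ≤ m then c k else q) = c k := if_pos (by omega)
      have h2 : (if k + 1 ≤ m then c (k+1) else q) = c (k+1) := if_pos (by omega)
      simp only [h1, h2]
      exact hw
    · have hkm : k = m := by omega
      rw [hkm]
      refine ⟨j, ?_⟩
      have h1 : (if m ≤ m then c m else q) = c m := if_pos (le_refl _)
      have h2 : (if m + 1 ≤ m then c (m+1) else q) = q := if_neg (by omega)
      simp only [h1, h2]
      omega

variable (hpos : ∀ i < N, 0 < x i)
  (hstep : ∀ i, i + 1 < N → x (i + 1) = x i + 1 ∨ x i = x (i + 1) + 1)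

section walk
include hstep

lemma walk_lip : ∀ d i, i + d < N → x (i + d) ≤ x i + d ∧ x i ≤ x (i + d) + d := by
  intro d
  induction d with
  | zero => intro i _; simp
  | succ d ih =>
    intro i hi
    have h1 := ih i (by omega)
    have h2 := hstep (i + d) (by omega)
    have : i + (d+1) = (i+d)+1 := by omega
    rw [this]
    omega

lemma ivt_up : ∀ d i, i + d < N → ∀ L, x i ≤ L → L ≤ x (i + d) →
    ∃ k, i ≤ k ∧ k ≤ i + d ∧ x k = L := by
  intro d
  induction d with
  | zero => intro i _ L h1 h2; rw [Nat.add_zero] at h2; exact ⟨i, le_refl _, by omega, by omega⟩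
  | succ d ih =>
    intro i hi L h1 h2
    rcases le_or_gt L (x (i + d)) with h | h
    · obtain ⟨k, hk⟩ := ih i (by omega) L h1 h
      exact ⟨k, by omega, by omega, hk.2.2⟩
    · have he : i + (d+1) = (i+d)+1 := by omega
      rw [he] at h2 ⊢
      rcases hstep (i + d) (by omega) with h3 | h3
      · exact ⟨(i+d)+1, by omega, by omega, by omega⟩
      · omega

lemma ivt_down : ∀ d i, i + d < N → ∀ L, L ≤ x i → x (i + d) ≤ L →
    ∃ k, i ≤ k ∧ k ≤ i + d ∧ x k = L := by
  intro d
  induction d with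
  | zero => intro i _ L h1 h2; rw [Nat.add_zero] at h2; exact ⟨i, le_refl _, by omega, by omega⟩
  | succ d ih =>
    intro i hi L h1 h2
    rcases le_or_gt (x (i + d)) L with h | h
    · obtain ⟨k, hk⟩ := ih i (by omega) L h1 h
      exact ⟨k, by omega, by omega, hk.2.2⟩
    · have he : i + (d+1) = (i+d)+1 := by omega
      rw [he] at h2 ⊢
      rcases hstep (i + d) (by omega) with h3 | h3
      · omega
      · exact ⟨(i+d)+1, by omega, by omega, by omega⟩

end walk

section AB
include hpos

lemma A_mem {p : ℕ} (hp : p < N) :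
    ∃ j, p ≤ j ∧ j < N ∧ j - p + 1 ≤ A x N p ∧ x j ≤ A x N p := by
  have hne : {L | ∃ j, p ≤ j ∧ j < N ∧ j - p + 1 ≤ L ∧ x j ≤ L}.Nonempty :=
    ⟨x p, p, le_refl _, hp, by have := hpos p hp; omega, le_refl _⟩
  exact Nat.sInf_mem hne

lemma A_le_x {p : ℕ} (hp : p < N) : A x N p ≤ x p := by
  apply Nat.sInf_le
  exact ⟨p, le_refl _, hp, by have := hpos p hp; omega, le_refl _⟩

lemma A_pos {p : ℕ} (hp : p < N) : 1 ≤ A x N p := by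
  obtain ⟨j, h⟩ := A_mem hpos hp
  omega

/-- values in the low window are at least `A` -/
lemma low_window {p j : ℕ} (hp : p < N) (hj1 : p ≤ j) (hj2 : j < N)
    (hj3 : j + 1 < p + A x N p) : A x N p ≤ x j := by
  by_contra h
  have hmem : A x N p - 1 ∈ {L | ∃ j, p ≤ j ∧ j < N ∧ j - p + 1 ≤ L ∧ x j ≤ L} :=
    ⟨j, hj1, hj2, by omega, by omega⟩
  have h5 : A x N p ≤ A x N p - 1 := Nat.sInf_le hmem
  have h6 := A_pos hpos hp
  omega

lemma A_succ_le {p : ℕ} (hp : p + 1 < N) : A x N p ≤ A x N (p + 1) + 1 := by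
  obtain ⟨j', g1, g2, g3, g4⟩ := A_mem hpos (show p + 1 < N from hp)
  exact Nat.sInf_le ⟨j', by omega, g2, by omega, by omega⟩

lemma phi_mono : ∀ p q, p ≤ q → q < N → p + A x N p ≤ q + A x N q := by
  intro p q hpq
  induction q, hpq using Nat.le_induction with
  | base => intro _; exact le_refl _
  | succ q hq ih =>
    intro hqN
    have h1 := ih (by omega)
    have h2 := A_succ_le hpos (show q + 1 < N from hqN)
    omega

lemma B_ge {p j : ℕ} (hj1 : p ≤ j) (hj2 : j < N) (hj3 : j + 1 ≤ x j + p) :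
    x j ≤ B x N p := by
  have := Finset.le_sup (f := fun j => if j + 1 ≤ x j + p then x j else 0)
    (Finset.mem_Ico.mpr ⟨hj1, hj2⟩)
  simpa [B, hj3] using this

lemma B_ge_x {p : ℕ} (hp : p < N) : x p ≤ B x N p :=
  B_ge hpos (le_refl _) hp (by have := hpos p hp; omega)

lemma B_witness {p L : ℕ} (hp : p < N) (hL : 1 ≤ L) (hLB : L ≤ B x N p) :
    ∃ j, p ≤ j ∧ j < N ∧ j + 1 ≤ x j + p ∧ L ≤ x j := by
  obtain ⟨j, hj, hj2⟩ := Finset.exists_mem_eq_sup (Finset.Ico p N)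
    ⟨p, Finset.mem_Ico.mpr ⟨le_refl _, hp⟩⟩ (fun j => if j + 1 ≤ x j + p then x j else 0)
  rw [Finset.mem_Ico] at hj
  have hLB' : L ≤ (Finset.Ico p N).sup (fun j => if j + 1 ≤ x j + p then x j else 0) := hLB
  by_cases hq : j + 1 ≤ x j + p
  · rw [hj2, if_pos hq] at hLB'
    exact ⟨j, hj.1, hj.2, hq, hLB'⟩
  · rw [hj2, if_neg hq] at hLB'
    omega

end AB

include hpos hstep in
lemma B4 {p : ℕ} (hp : p + 1 < N) : A x N (p + 1) ≤ B x N p := by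
  have h1 : A x N (p+1) ≤ x (p+1) := A_le_x hpos hp
  rcases hstep p hp with h | h
  · have h2 : x (p+1) ≤ B x N p :=
      B_ge hpos (by omega) hp (by have := hpos p (by omega); omega)
    omega
  · have h2 : x p ≤ B x N p := B_ge_x hpos (by omega)
    omega

include hpos hstep in
/-- a chunk of any length between `A p` and `B p` is proper -/
lemma chunk_exists {p L : ℕ} (hp : p < N) (hL : p + L ≤ N)
    (h1 : A x N p ≤ L) (h2 : L ≤ B x N p) :
    ∃ j, p ≤ j ∧ j < p + L ∧ x j = L := by
  have hL1 : 1 ≤ L := le_trans (A_pos hpos hp) h1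
  obtain ⟨j1, a1, a2, a3, a4⟩ := A_mem hpos hp
  obtain ⟨j2, b1, b2, b3, b4⟩ := B_witness hpos hp hL1 h2
  have hj1w : j1 < p + L := by omega
  have hx1 : x j1 ≤ L := by omega
  rcases Nat.lt_or_ge j2 (p + L) with hj2w | hj2w
  · -- both witnesses in window
    rcases le_or_gt j1 j2 with hor | hor
    · obtain ⟨k, hk1, hk2, hk3⟩ := ivt_up hstep (j2 - j1) j1 (by omega) L hx1
        (by rw [show j1 + (j2 - j1) = j2 by omega]; exact b4)
      exact ⟨k, by omega, by omega, hk3⟩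
    · obtain ⟨k, hk1, hk2, hk3⟩ := ivt_down hstep (j1 - j2) j2 (by omega) L b4
        (by rw [show j2 + (j1 - j2) = j1 by omega]; exact hx1)
      exact ⟨k, by omega, by omega, hk3⟩
  · -- j2 beyond window: the last cell of the window has big value
    have he : p + L - 1 < N := by omega
    have hlip := walk_lip hstep (j2 - (p + L - 1)) (p + L - 1) (by omega)
    rw [show p + L - 1 + (j2 - (p + L - 1)) = j2 by omega] at hlip
    have hbig : L ≤ x (p + L - 1) := by omega
    obtain ⟨k, hk1, hk2, hk3⟩ := ivt_up hstep (p + L - 1 - j1) j1 (by omega) L hx1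
      (by rw [show j1 + (p + L - 1 - j1) = p + L - 1 by omega]; exact hbig)
    exact ⟨k, by omega, by omega, hk3⟩

include hpos hstep in
lemma cover : ∀ d u, (∀ q, u ≤ q → q ≤ u + d → ProperChunkPartition x q) →
    u + d < N → ∀ Q, u + A x N u ≤ Q → Q ≤ (u + d) + B x N (u + d) → Q ≤ N →
    ProperChunkPartition x Q := by
  intro d
  induction d with
  | zero =>
    intro u hre hu Q hQ1 hQ2 hQ3
    simp only [Nat.add_zero] at hQ2 hu
    have hA1 := A_pos hpos hu
    obtain ⟨j, hj1, hj2, hj3⟩ := chunk_exists hpos hstep hu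
      (show u + (Q - u) ≤ N by omega) (show A x N u ≤ Q - u by omega)
      (show Q - u ≤ B x N u by omega)
    exact reach_step (hre u (le_refl _) (le_refl _)) (by omega) j hj1 (by omega) (by omega)
  | succ d ih =>
    intro u hre hu Q hQ1 hQ2 hQ3
    set r := u + (d + 1) with hr
    rcases le_or_gt (r + A x N r) Q with h | h
    · have hA1 := A_pos hpos (show r < N from hu)
      obtain ⟨j, hj1, hj2, hj3⟩ := chunk_exists hpos hstep (show r < N from hu)
        (show r + (Q - r) ≤ N by omega) (show A x N r ≤ Q - r by omega)
        (show Q - r ≤ B x N r by omega)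
      exact reach_step (hre r (by omega) (le_refl _)) (by omega) j hj1 (by omega) (by omega)
    · have hB4 : A x N r ≤ B x N (u + d) := by
        have : u + d + 1 < N := by omega
        simpa [hr, show u + (d+1) = u + d + 1 by omega] using B4 hpos hstep this
      exact ih u (fun q h1 h2 => hre q h1 (by omega)) (by omega) Q hQ1 (by omega) hQ3


include hpos hstep in
lemma main (h21 : 2 ≤ N → ¬(x 0 = 2 ∧ x 1 = 1)) {M : ℕ}
    (hM : ∀ i < N, x i ≤ M) (hMN : M * M ≤ N) (hN1 : 0 < N) :
    ∀ k, ProperChunkPartition x N ∨ ∃ u r, u ≤ r ∧ r < N ∧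
      (∀ q, u ≤ q → q ≤ r → ProperChunkPartition x q) ∧
      min k (A x N u - 1) ≤ r - u ∧ u ≤ k * M ∧ k ≤ u := by
  intro k
  induction k with
  | zero =>
    right
    refine ⟨0, 0, le_refl _, hN1, ?_, by simp, by simp, by simp⟩
    intro q h1 h2
    have : q = 0 := by omega
    rw [this]; exact reach_zero
  | succ k ih =>
    rcases ih with done | ⟨u, r, hur, hrN, hre, hinv, huk, hku⟩
    · exact Or.inl done
    have huN : u < N := lt_of_le_of_lt hur hrN
    set a := A x N u with ha_def
    set b := B x N r with hb_def
    have hbx : x r ≤ b := B_ge_x hpos hrN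
    have hxr1 : 1 ≤ x r := hpos r hrN
    have hb1 : 1 ≤ b := le_trans hxr1 hbx
    have haxu : a ≤ x u := A_le_x hpos huN
    have ha1 : 1 ≤ a := A_pos hpos huN
    have hxuM : x u ≤ M := hM u huN
    -- lipschitz: x u ≤ x r + (r - u)
    have hlipur : x u ≤ x r + (r - u) := by
      have h := walk_lip hstep (r - u) u (by omega)
      rw [show u + (r - u) = r by omega] at h
      omega
    -- not stuck
    have hstuck : u + a ≤ N := by
      by_contra hcon
      push_neg at hcon
      rcases le_or_gt (a - 1) (r - u) with hc | hc
      · omega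
      · have hkle : k ≤ r - u := by
          rcases le_total k (a - 1) with h' | h'
          · rw [min_eq_left h'] at hinv; omega
          · rw [min_eq_right h'] at hinv; omega
        have haM : a ≤ M := le_trans haxu hxuM
        have e0 : (k+1) * M = k * M + M := by ring
        have e2 : (k+1) * M ≤ (M-1) * M := Nat.mul_le_mul_right M (by omega)
        have e3 : (M-1) * M < M * M := by
          have hM1 : 0 < M := by omega
          exact Nat.mul_lt_mul_of_lt_of_le (by omega) (le_refl M) hM1
        linarith
    -- helper: cover from the interval [u, r]
    have hcover : ∀ Q, u + a ≤ Q → Q ≤ r + b → Q ≤ N → ProperChunkPartition x Q := by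
      intro Q h1 h2 h3
      have hru : u + (r - u) = r := by omega
      apply cover hpos hstep (r - u) u (fun q hq1 hq2 => hre q hq1 (by omega))
        (by rw [hru]; exact hrN) Q h1 (by rw [hru]; exact h2) h3
    rcases le_or_gt N (r + b) with hNrb | hNrb
    · exact Or.inl (hcover N hstuck hNrb (le_refl _))
    · right
      refine ⟨u + a, r + b, ?_, hNrb, ?_, ?_, ?_, by omega⟩
      · omega
      · intro q h1 h2
        exact hcover q h1 h2 (by omega)
      case refine_4 =>
        have haM : a ≤ M := le_trans haxu hxuM
        have e0 : (k+1) * M = k * M + M := by ring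
        linarith
      · -- the invariant
        rcases le_or_gt (a - 1) (r - u) with hcase | hcase
        · -- wide case
          have hr1N : r + 1 < N := by omega
          have hphi : (u + a) + A x N (u + a) ≤ (r + 1) + A x N (r + 1) :=
            phi_mono hpos (u + a) (r + 1) (by omega) hr1N
          have hb4 : A x N (r + 1) ≤ b := B4 hpos hstep hr1N
          have hfin : A x N (u + a) - 1 ≤ (r + b) - (u + a) := by omega
          exact le_trans (min_le_right _ _) hfin
        · -- narrow case
          have hkle : k ≤ r - u := by
            rcases le_total k (a - 1) with h' | h'
            · rw [min_eq_left h'] at hinv; omega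
            · rw [min_eq_right h'] at hinv; omega
          have hlow : ∀ j, u ≤ j → j + 1 < u + a → a ≤ x j := by
            intro j h1 h2
            exact low_window hpos huN h1 (by omega) h2
          have hxra : a ≤ x r := hlow r hur (by omega)
          rcases le_or_gt (a + 1) b with hbig | hsmall
          · have : k + 1 ≤ (r + b) - (u + a) := by omega
            exact le_trans (min_le_left _ _) this
          · have hba : b = a := by omega
            have hxr_a : x r = a := by omega
            have hr1N : r + 1 < N := by omega
            have hdesc : x (r + 1) + 1 = x r := by
              rcases hstep r hr1N with h3 | h3
              · exfalso
                have hq : x (r+1) ≤ b := B_ge hpos (by omega) hr1N (by omega)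
                omega
              · omega
            have hw : r - u = a - 2 := by
              rcases le_or_gt (u + a) (r + 2) with h | h
              · omega
              · have := hlow (r+1) (by omega) (by omega)
                omega
            rcases Nat.lt_or_ge a 3 with ha3 | ha3
            · -- a = 2 : forbidden (2,1) start
              exfalso
              have ha2 : a = 2 := by omega
              have hk0 : k = 0 := by omega
              rw [hk0] at huk
              have hu0 : u = 0 := by simpa using huk
              have hru0 : r = 0 := by omega
              apply h21 (by omega)
              constructor
              · rw [← hru0]; omega
              · have : (1:ℕ) = r + 1 := by omega
                rw [this]; omega
            · -- a ≥ 3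
              have hu' : u + a = r + 2 := by omega
              have hr2N : r + 2 < N := by omega
              have e12 : r + 1 + 1 = r + 2 := by omega
              rcases hstep (r+1) (by omega) with h3 | h3
              · -- x (r+2) = a
                rw [e12] at h3
                have hr3N : r + 3 < N := by omega
                have e23 : r + 2 + 1 = r + 3 := by omega
                rcases hstep (r+2) (by omega) with h4 | h4
                · exfalso
                  rw [e23] at h4
                  have hq : x (r+3) ≤ b := B_ge hpos (by omega) hr3N (by omega)
                  omega
                · rw [e23] at h4
                  have hAle : A x N (u + a) ≤ a - 1 :=
                    Nat.sInf_le ⟨r+3, by omega, hr3N, by omega, by omega⟩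
                  exact le_trans (min_le_right _ _) (by omega)
              · -- x (r+2) = a - 2
                rw [e12] at h3
                have hAle : A x N (u + a) ≤ a - 2 := by
                  have h5 := A_le_x hpos (show u + a < N by omega)
                  have h6 : x (u + a) = a - 2 := by rw [hu']; omega
                  omega
                exact le_trans (min_le_right _ _) (by omega)

end ChunkAux

theorem chunking_lemma (x : ℕ → ℕ) (N : ℕ)
    (hpos : ∀ i < N, 0 < x i)
    (h21 : 2 ≤ N → ¬(x 0 = 2 ∧ x 1 = 1))
    (hstep : ∀ i, i + 1 < N → x (i + 1) = x i + 1 ∨ x i = x (i + 1) + 1)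
    (hN : ∀ i < N, x i ^ 2 ≤ N) :
    ProperChunkPartition x N := by
  rcases Nat.eq_zero_or_pos N with h0 | hN1
  · rw [h0]; exact ChunkAux.reach_zero
  set M := (Finset.range N).sup x with hM_def
  have hM : ∀ i < N, x i ≤ M := fun i hi => Finset.le_sup (Finset.mem_range.mpr hi)
  have hMN : M * M ≤ N := by
    obtain ⟨i0, hi0, hsup⟩ := Finset.exists_mem_eq_sup (Finset.range N)
      ⟨0, Finset.mem_range.mpr hN1⟩ x
    have h := hN i0 (Finset.mem_range.mp hi0)
    rw [pow_two] at h
    rw [hM_def, hsup]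
    exact h
  rcases ChunkAux.main hpos hstep h21 hM hMN hN1 N with done | ⟨u, r, hur, hrN, _, _, _, hku⟩
  · exact done
  · omega
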